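/- For all graphs G and H, if H is not a minor of G, then every graph that contains the 1-subdivision H^(1) of H as an induced minor is not a region intersection graph over G. -/

import Mathlib

/-- A set of vertices is connected in `G` if the induced subgraph is connected
(in particular, it is nonempty). -/
def ConnectedIn {V : Type*} (G : SimpleGraph V) (S : Set V) : Prop :=
  (G.induce S).Connected

/-- `H` is a minor of `G`: there is a minor model of `H` in `G`, i.e. a family of
nonempty, connected, pairwise disjoint branch sets, with an edge of `G` between the
branch sets of any two vertices adjacent in `H`. -/
def IsMinor {α β : Type*} (H : SimpleGraph α) (G : SimpleGraph β) : Prop :=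
  ∃ φ : α → Set β,
    (∀ a, ConnectedIn G (φ a)) ∧
    (Pairwise fun a b => Disjoint (φ a) (φ b)) ∧
    (∀ a b : α, H.Adj a b → ∃ u ∈ φ a, ∃ v ∈ φ b, G.Adj u v)

/-- `H` is an induced minor of `G`: as for a minor model, but two distinct branch sets
are joined by an edge of `G` *iff* the corresponding vertices are adjacent in `H`. -/
def IsInducedMinor {α β : Type*} (H : SimpleGraph α) (G : SimpleGraph β) : Prop :=
  ∃ φ : α → Set β,
    (∀ a, ConnectedIn G (φ a)) ∧
    (Pairwise fun a b => Disjoint (φ a) (φ b)) ∧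
    (∀ a b : α, a ≠ b → (H.Adj a b ↔ ∃ u ∈ φ a, ∃ v ∈ φ b, G.Adj u v))

/-- `G` is a region intersection graph over `H`: every vertex `v` of `G` is assigned a
connected subgraph (region) `R v` of `H` such that two distinct vertices of `G` are
adjacent iff their regions intersect. -/
def IsRIG {α β : Type*} (G : SimpleGraph α) (H : SimpleGraph β) : Prop :=
  ∃ R : α → Set β,
    (∀ v, ConnectedIn H (R v)) ∧
    (∀ u v : α, u ≠ v → (G.Adj u v ↔ (R u ∩ R v).Nonempty))

/-- Identification relation used to build the internal vertices of the `ℓ`-subdivision: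
the `i`-th internal vertex of the edge directed as `(u, v)` equals the `(ℓ-1-i)`-th
internal vertex of the edge directed as `(v, u)`. -/
def SubdivRel {V : Type*} (G : SimpleGraph V) (ℓ : ℕ) :
    ({d : V × V // G.Adj d.1 d.2} × Fin ℓ) → ({d : V × V // G.Adj d.1 d.2} × Fin ℓ) → Prop :=
  fun a b => a.1.1.1 = b.1.1.2 ∧ a.1.1.2 = b.1.1.1 ∧ (a.2 : ℕ) + (b.2 : ℕ) + 1 = ℓ

/-- Vertices of the `ℓ`-subdivision of `G`: the branching (original) vertices together
with `ℓ` internal (subdivision) vertices on each edge. -/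
def SubdivVert {V : Type*} (G : SimpleGraph V) (ℓ : ℕ) : Type _ :=
  V ⊕ Quot (SubdivRel G ℓ)

/-- The `ℓ`-subdivision `G^(ℓ)` of `G`: every edge of `G` is replaced by a path with
`ℓ + 1` edges (so with `ℓ` new internal vertices). -/
def subdiv {V : Type*} (G : SimpleGraph V) (ℓ : ℕ) : SimpleGraph (SubdivVert G ℓ) :=
  SimpleGraph.fromRel (fun x y =>
    (ℓ = 0 ∧ ∃ u v : V, G.Adj u v ∧ x = Sum.inl u ∧ y = Sum.inl v) ∨
    (∃ (d : {d : V × V // G.Adj d.1 d.2}) (i : Fin ℓ),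
      (i : ℕ) = 0 ∧ x = Sum.inl d.1.1 ∧ y = Sum.inr (Quot.mk _ (d, i))) ∨
    (∃ (d : {d : V × V // G.Adj d.1 d.2}) (i j : Fin ℓ),
      (i : ℕ) + 1 = (j : ℕ) ∧ x = Sum.inr (Quot.mk _ (d, i)) ∧ y = Sum.inr (Quot.mk _ (d, j))))

open SimpleGraph

section helpers
variable {α γ : Type*} {G : SimpleGraph α} {X : SimpleGraph γ}

lemma ConnectedIn.nonempty {S : Set α} (h : ConnectedIn G S) : S.Nonempty :=
  Set.nonempty_coe_sort.mp (SimpleGraph.Connected.nonempty h)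

lemma reach_mono {S T : Set α} (hST : S ⊆ T) {u v : α} {hu : u ∈ S} {hv : v ∈ S}
    (h : (G.induce S).Reachable ⟨u, hu⟩ ⟨v, hv⟩) :
    (G.induce T).Reachable ⟨u, hST hu⟩ ⟨v, hST hv⟩ :=
  h.map (SimpleGraph.induceHomOfLE G hST).toHom

lemma ConnectedIn.reach {S : Set α} (h : ConnectedIn G S) {u v : α} (hu : u ∈ S) (hv : v ∈ S) :
    (G.induce S).Reachable ⟨u, hu⟩ ⟨v, hv⟩ :=
  h.preconnected _ _

lemma aux_reach {S : Set γ} {R : γ → Set α}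
    (hR : ∀ x ∈ S, ConnectedIn G (R x))
    (hmeet : ∀ x y, x ∈ S → y ∈ S → X.Adj x y → (R x ∩ R y).Nonempty) :
    ∀ {x y : S} (_ : (X.induce S).Walk x y) {u v : α} (hu : u ∈ R x) (hv : v ∈ R y),
      (G.induce (⋃ z ∈ S, R z)).Reachable
        ⟨u, Set.mem_biUnion x.2 hu⟩ ⟨v, Set.mem_biUnion y.2 hv⟩ := by
  intro x y w
  induction w with
  | nil =>
    rename_i z
    intro u v hu hv
    exact reach_mono (Set.subset_biUnion_of_mem (u := R) z.2) ((hR _ z.2).reach hu hv)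
  | @cons a c b hadj w ih =>
    intro u v hu hv
    have hxz : X.Adj a.1 c.1 := hadj
    obtain ⟨p, hpx, hpz⟩ := hmeet a.1 c.1 a.2 c.2 hxz
    exact (reach_mono (Set.subset_biUnion_of_mem (u := R) a.2) ((hR _ a.2).reach hu hpx)).trans
      (ih hpz hv)

lemma connectedIn_biUnion {S : Set γ} {R : γ → Set α}
    (hS : ConnectedIn X S)
    (hR : ∀ x ∈ S, ConnectedIn G (R x))
    (hmeet : ∀ x y, x ∈ S → y ∈ S → X.Adj x y → (R x ∩ R y).Nonempty) :
    ConnectedIn G (⋃ z ∈ S, R z) := by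
  obtain ⟨x₀, hx₀⟩ := hS.nonempty
  obtain ⟨u₀, hu₀⟩ := (hR x₀ hx₀).nonempty
  rw [ConnectedIn, connected_iff_exists_forall_reachable]
  refine ⟨⟨u₀, Set.mem_biUnion hx₀ hu₀⟩, ?_⟩
  rintro ⟨v, hv⟩
  obtain ⟨y, hy, hvy⟩ := Set.mem_iUnion₂.mp hv
  exact (hS.preconnected ⟨x₀, hx₀⟩ ⟨y, hy⟩).elim fun w =>
    aux_reach hR hmeet (x := ⟨x₀, hx₀⟩) (y := ⟨y, hy⟩) w hu₀ hvy

lemma connectedIn_union_iUnion {ι : Sort*} {A : Set α} {C : ι → Set α}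
    (hA : ConnectedIn G A) (h : ∀ i, ConnectedIn G (A ∪ C i)) :
    ConnectedIn G (A ∪ ⋃ i, C i) := by
  obtain ⟨u, hu⟩ := hA.nonempty
  apply SimpleGraph.induce_connected_of_patches u (Or.inl hu)
  intro v hv
  rcases hv with hv | hv
  · exact ⟨A, Set.subset_union_left, hu, hv, hA.reach hu hv⟩
  · obtain ⟨i, hvi⟩ := Set.mem_iUnion.mp hv
    exact ⟨A ∪ C i, Set.union_subset_union_right _ (Set.subset_iUnion _ i),
      Or.inl hu, Or.inr hvi, (h i).reach (Or.inl hu) (Or.inr hvi)⟩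

/-- homomorphism from induced subgraph to ambient graph -/
def valHom (G : SimpleGraph α) (U : Set α) : G.induce U →g G := ⟨Subtype.val, fun h => h⟩

lemma crossing {A B S : Set α} (hA : ConnectedIn G A) (hS : ConnectedIn G S)
    (hAB : Disjoint A B) (hSA : (S ∩ A).Nonempty) (hSB : (S ∩ B).Nonempty) :
    ∃ T ⊆ S, Disjoint T B ∧ ConnectedIn G (A ∪ T) ∧
      ∃ u ∈ A ∪ T, ∃ v ∈ B, G.Adj u v := by
  classical
  obtain ⟨p, hpS, hpA⟩ := hSA
  obtain ⟨q, hqS, hqB⟩ := hSB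
  have hpB : p ∉ B := fun h => Set.disjoint_left.mp hAB hpA h
  have hp' : p ∈ S \ B := ⟨hpS, hpB⟩
  set T : Set α :=
    {x | ∃ hx : x ∈ S \ B, (G.induce (S \ B)).Reachable ⟨p, hp'⟩ ⟨x, hx⟩} with hT
  have hTsub : T ⊆ S \ B := by rintro x ⟨hx, -⟩; exact hx
  have hpT : p ∈ T := ⟨hp', Reachable.refl _⟩
  have hTconn : (G.induce T).Connected := by
    apply SimpleGraph.induce_connected_of_patches p hpT
    intro v hv
    obtain ⟨hv', hr⟩ := hv
    obtain ⟨w⟩ := hr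
    have hsub : {x | x ∈ (w.map (valHom G (S \ B))).support} ⊆ T := by
      intro x hx
      rw [Set.mem_setOf_eq, Walk.support_map, List.mem_map] at hx
      obtain ⟨y, hy, rfl⟩ := hx
      exact ⟨y.2, ⟨w.takeUntil y hy⟩⟩
    refine ⟨_, hsub, ?_, ?_, (w.map (valHom G (S \ B))).connected_induce_support.preconnected _ _⟩
    · exact Walk.start_mem_support _
    · exact Walk.end_mem_support _
  have hAT : (G.induce (A ∪ T)).Connected :=
    SimpleGraph.induce_union_connected hA.preconnected hTconn.preconnected ⟨p, hpA, hpT⟩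
  obtain ⟨w₀⟩ := hS.preconnected ⟨p, hpS⟩ ⟨q, hqS⟩
  have hqT : q ∉ T := fun hq => (hTsub hq).2 hqB
  obtain ⟨d, hd, hdT, hdnT⟩ := (w₀.map (valHom G S)).exists_boundary_dart T hpT hqT
  have hd2S : d.snd ∈ S := by
    have := Walk.dart_snd_mem_support_of_mem_darts _ hd
    rw [Walk.support_map, List.mem_map] at this
    obtain ⟨y, -, hEq⟩ := this
    rw [← hEq]; exact y.2
  have hd2B : d.snd ∈ B := by
    by_contra h
    obtain ⟨hd1', hr⟩ := hdT
    exact hdnT ⟨⟨hd2S, h⟩, hr.trans ⟨Walk.cons (by exact d.adj) Walk.nil⟩⟩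
  exact ⟨T, hTsub.trans Set.diff_subset,
    Set.disjoint_left.mpr fun {x} hx => (hTsub hx).2, hAT,
    d.fst, Or.inr hdT, d.snd, hd2B, d.adj⟩

end helpers

section subdivlemmas
variable {β : Type*} (H : SimpleGraph β)

/-- The edge (as unordered pair) underlying an internal vertex. -/
def Esym : Quot (SubdivRel H 1) → Sym2 β :=
  Quot.lift (fun p => s(p.1.1.1, p.1.1.2)) (by
    rintro ⟨⟨⟨a, b⟩, hab⟩, i⟩ ⟨⟨⟨c, e⟩, hce⟩, j⟩ ⟨h1, h2, -⟩
    simp only at h1 h2 ⊢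
    subst h1; subst h2
    exact Sym2.eq_swap)

/-- The internal vertex in the middle of an edge. -/
def mid {a b : β} (hab : H.Adj a b) : Quot (SubdivRel H 1) :=
  Quot.mk _ (⟨(a, b), hab⟩, 0)

lemma mid_symm {a b : β} (hab : H.Adj a b) : mid H hab.symm = mid H hab :=
  Quot.sound ⟨rfl, rfl, rfl⟩

lemma Esym_mid {a b : β} (hab : H.Adj a b) : Esym H (mid H hab) = s(a, b) := rfl

lemma adj_inl_mid {a b : β} (hab : H.Adj a b) :
    (subdiv H 1).Adj (Sum.inl a) (Sum.inr (mid H hab)) := by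
  refine ⟨Sum.inl_ne_inr, Or.inl (Or.inr (Or.inl ⟨⟨(a, b), hab⟩, 0, rfl, rfl, rfl⟩))⟩

lemma adj_inl_mid' {a b : β} (hab : H.Adj a b) :
    (subdiv H 1).Adj (Sum.inl b) (Sum.inr (mid H hab)) := by
  have := adj_inl_mid H hab.symm
  rwa [mid_symm] at this

lemma not_adj_inl_inl (a b : β) : ¬ (subdiv H 1).Adj (Sum.inl a) (Sum.inl b) := by
  rintro ⟨-, (⟨h0, -⟩ | ⟨d, i, -, -, hy⟩ | ⟨d, i, j, -, hx, -⟩) |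
           (⟨h0, -⟩ | ⟨d, i, -, -, hy⟩ | ⟨d, i, j, -, hx, -⟩)⟩ <;>
    first | exact one_ne_zero h0 | exact nomatch hy | exact nomatch hx

lemma not_adj_inr_inr (m m' : Quot (SubdivRel H 1)) :
    ¬ (subdiv H 1).Adj (Sum.inr m) (Sum.inr m') := by
  rintro ⟨-, (⟨h0, -⟩ | ⟨d, i, -, hx, -⟩ | ⟨d, i, j, hij, -, -⟩) |
           (⟨h0, -⟩ | ⟨d, i, -, hx, -⟩ | ⟨d, i, j, hij, -, -⟩)⟩ <;>
    first
    | exact one_ne_zero h0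
    | exact nomatch hx
    | exact absurd hij (by have := i.isLt; have := j.isLt; omega)

lemma adj_inl_inr {c : β} {m : Quot (SubdivRel H 1)}
    (h : (subdiv H 1).Adj (Sum.inl c) (Sum.inr m)) : c ∈ Esym H m := by
  obtain ⟨-, (⟨h0, -⟩ | ⟨d, i, -, hx, hy⟩ | ⟨d, i, j, -, hx, -⟩) |
           (⟨h0, -⟩ | ⟨d, i, -, hx, -⟩ | ⟨d, i, j, -, -, hy⟩)⟩ := h
  · exact absurd h0 one_ne_zero
  · obtain ⟨rfl⟩ : c = d.1.1 := Sum.inl.inj hx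
    obtain ⟨rfl⟩ : m = Quot.mk _ (d, i) := Sum.inr.inj hy
    exact Sym2.mem_mk_left _ _
  · exact nomatch hx
  · exact absurd h0 one_ne_zero
  · exact nomatch hx
  · exact nomatch hy

end subdivlemmas

/-- If `H` is not a minor of `G`, then any graph containing the 1-subdivision `H^(1)`
of `H` as an induced minor is not a region intersection graph over `G`. -/
theorem statement2 {α β : Type*} (G : SimpleGraph α) (H : SimpleGraph β)
    (hHG : ¬ IsMinor H G) :
    ∀ {γ : Type*} (X : SimpleGraph γ),
      IsInducedMinor (subdiv H 1) X → ¬ IsRIG X G := by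
  intro γ X hIM hRIG
  obtain ⟨φ, hφc, hφd, hφa⟩ := hIM
  obtain ⟨R, hRc, hRa⟩ := hRIG
  apply hHG
  classical
  set Ψ₀ : SubdivVert H 1 → Set α := fun w => ⋃ x ∈ φ w, R x with hΨ₀
  have conn : ∀ w, ConnectedIn G (Ψ₀ w) := fun w =>
    connectedIn_biUnion (hφc w) (fun x _ => hRc x)
      (fun x y _ _ hxy => (hRa x y hxy.ne).mp hxy)
  have keydisj : ∀ w w' : SubdivVert H 1, w ≠ w' → ¬ (subdiv H 1).Adj w w' →
      Disjoint (Ψ₀ w) (Ψ₀ w') := by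
    intro w w' hne hnadj
    rw [Set.disjoint_left]
    rintro a ha ha'
    obtain ⟨x, hx, hax⟩ := Set.mem_iUnion₂.mp ha
    obtain ⟨y, hy, hay⟩ := Set.mem_iUnion₂.mp ha'
    have hxy : x ≠ y := fun h => Set.disjoint_left.mp (hφd hne) hx (h ▸ hy)
    have hnadjxy : ¬ X.Adj x y := fun h => hnadj ((hφa w w' hne).mpr ⟨x, hx, y, hy, h⟩)
    exact hnadjxy ((hRa x y hxy).mpr ⟨a, hax, hay⟩)
  have touch : ∀ {a b : β} (hab : H.Adj a b),
      (Ψ₀ (Sum.inr (mid H hab)) ∩ Ψ₀ (Sum.inl a)).Nonempty := by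
    intro a b hab
    obtain ⟨u, hu, v, hv, huv⟩ :=
      (hφa (Sum.inl a) (Sum.inr (mid H hab)) Sum.inl_ne_inr).mp (adj_inl_mid H hab)
    obtain ⟨c, hc1, hc2⟩ := (hRa u v huv.ne).mp huv
    exact ⟨c, Set.mem_biUnion hv hc2, Set.mem_biUnion hu hc1⟩
  have hrep : ∀ m : Quot (SubdivRel H 1), ∃ p, Quot.mk (SubdivRel H 1) p = m :=
    Quot.exists_rep
  choose pm hpm using hrep
  set ea : Quot (SubdivRel H 1) → β := fun m => (pm m).1.1.1 with hea
  set eb : Quot (SubdivRel H 1) → β := fun m => (pm m).1.1.2 with heb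
  have hadj_e : ∀ m, H.Adj (ea m) (eb m) := fun m => (pm m).1.2
  have hmid : ∀ m, mid H (hadj_e m) = m := by
    intro m
    conv_rhs => rw [← hpm m]
    unfold mid
    congr 1
    exact Prod.ext (Subtype.ext rfl) (Subsingleton.elim _ _)
  have hEsym : ∀ m, Esym H m = s(ea m, eb m) := by
    intro m
    conv_lhs => rw [← hpm m]
    rfl
  have hcross : ∀ m : Quot (SubdivRel H 1),
      ∃ T ⊆ Ψ₀ (Sum.inr m), Disjoint T (Ψ₀ (Sum.inl (eb m))) ∧
        ConnectedIn G (Ψ₀ (Sum.inl (ea m)) ∪ T) ∧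
        ∃ u ∈ Ψ₀ (Sum.inl (ea m)) ∪ T, ∃ v ∈ Ψ₀ (Sum.inl (eb m)), G.Adj u v := by
    intro m
    have h1 := touch (hadj_e m)
    have h2 := touch (hadj_e m).symm
    rw [hmid m] at h1
    rw [mid_symm H (hadj_e m), hmid m] at h2
    exact crossing (conn _) (conn _)
      (keydisj _ _ (fun h => (hadj_e m).ne (Sum.inl.inj h)) (not_adj_inl_inl H _ _)) h1 h2
  choose T hTsub hTdisjB hTconn hTedge using hcross
  have hdisjT : ∀ (c : β) (m : Quot (SubdivRel H 1)), c ≠ ea m → c ≠ eb m →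
      Disjoint (Ψ₀ (Sum.inl c)) (T m) := by
    intro c m h1 h2
    refine Disjoint.mono_right (hTsub m) (keydisj _ _ Sum.inl_ne_inr ?_)
    intro hadj
    have hc := adj_inl_inr H hadj
    rw [hEsym m, Sym2.mem_iff] at hc
    rcases hc with hc | hc
    · exact h1 hc
    · exact h2 hc
  refine ⟨fun c => Ψ₀ (Sum.inl c) ∪ ⋃ m : {m // ea m = c}, T m.1, ?_, ?_, ?_⟩
  · intro c
    apply connectedIn_union_iUnion (conn _)
    rintro ⟨m, rfl⟩
    exact hTconn m
  · intro c c' hne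
    rw [Set.disjoint_union_left]
    constructor
    · rw [Set.disjoint_union_right]
      constructor
      · exact keydisj _ _ (fun h => hne (Sum.inl.inj h)) (not_adj_inl_inl H _ _)
      · rw [Set.disjoint_iUnion_right]
        rintro ⟨m, rfl⟩
        by_cases hc : c = eb m
        · subst hc
          exact (hTdisjB m).symm.mono_left (by rfl)
        · exact hdisjT c m hne hc
    · rw [Set.disjoint_iUnion_left]
      rintro ⟨m, rfl⟩
      rw [Set.disjoint_union_right]
      constructor
      · by_cases hc : c' = eb m
        · subst hc
          exact hTdisjB m
        · exact (hdisjT c' m (Ne.symm hne) hc).symm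
      · rw [Set.disjoint_iUnion_right]
        rintro ⟨m', hm'⟩
        have hmm' : m ≠ m' := fun h => hne (by rw [h]; exact hm'.symm ▸ rfl)
        refine Disjoint.mono (hTsub m) (hTsub m') (keydisj _ _ (fun h => hmm' (Sum.inr.inj h)) ?_)
        exact not_adj_inr_inr H m m'
  · intro a b hab
    have hsym : s(ea (mid H hab), eb (mid H hab)) = s(a, b) := by
      rw [← hEsym]; exact Esym_mid H hab
    obtain ⟨u, hu, v, hv, huv⟩ := hTedge (mid H hab)
    rcases Sym2.eq_iff.mp hsym with ⟨h1, h2⟩ | ⟨h1, h2⟩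
    · refine ⟨u, ?_, v, Or.inl (h2 ▸ hv), huv⟩
      rcases hu with hu | hu
      · exact Or.inl (h1 ▸ hu)
      · exact Or.inr (Set.mem_iUnion.mpr ⟨⟨mid H hab, h1⟩, hu⟩)
    · refine ⟨v, Or.inl (h2 ▸ hv), u, ?_, huv.symm⟩
      rcases hu with hu | hu
      · exact Or.inl (h1 ▸ hu)
      · exact Or.inr (Set.mem_iUnion.mpr ⟨⟨mid H hab, h1⟩, hu⟩)
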